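/- For every odd n ∈ ℕ, the n-argyle is a peaceful battle on the n×n torus 𝕋_n: its sets B and W are disjoint, and every hyperedge e of 𝕋_n satisfies e∩B = ∅ or e∩W = ∅. -/

import Mathlib

open Finset

/-- The cells of the `n × n` board, i.e. `[n] × [n]` with `[n] = {1, …, n}`. -/
def cells (n : ℕ) : Finset (ℕ × ℕ) := Finset.Icc 1 n ×ˢ Finset.Icc 1 n

/-- The hyperedges of the `n × n` torus `𝕋_n`: rows, columns, `ℤ_n`-diagonals and
`ℤ_n`-skew-diagonals. -/
def torusEdges (n : ℕ) : Set (Finset (ℕ × ℕ)) :=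
  {e | (∃ i ∈ Finset.Icc 1 n, e = (cells n).filter (fun p => p.1 = i)) ∨
       (∃ j ∈ Finset.Icc 1 n, e = (cells n).filter (fun p => p.2 = j)) ∨
       (∃ k : ZMod n, e = (cells n).filter (fun p => (p.1 : ZMod n) - (p.2 : ZMod n) = k)) ∨
       (∃ k : ZMod n, e = (cells n).filter (fun p => (p.1 : ZMod n) + (p.2 : ZMod n) = k))}

/-- A peaceful battle on the `n × n` torus `𝕋_n`: disjoint sets `B, W ⊆ [n] × [n]` such that
no hyperedge meets both. -/
def IsPeacefulTorus (n : ℕ) (B W : Finset (ℕ × ℕ)) : Prop :=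
  B ⊆ cells n ∧ W ⊆ cells n ∧ Disjoint B W ∧
    ∀ e ∈ torusEdges n, e ∩ B = ∅ ∨ e ∩ W = ∅

/-- `t n` : the largest `m` so that some peaceful battle `(B, W)` on `𝕋_n` has `|B| = |W| = m`. -/
noncomputable def t (n : ℕ) : ℕ :=
  sSup {m : ℕ | ∃ B W : Finset (ℕ × ℕ), IsPeacefulTorus n B W ∧ B.card = m ∧ W.card = m}

/-- The white squares of the `n`-argyle (for odd `n`):
`(i,j)` with `i, j` both odd, `−⌊n/3⌋ ≤ i − j ≤ ⌊n/3⌋ − 1`, and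
(`i + j ≤ ⌊2n/3⌋` or `i + j ≥ ⌈4n/3⌉ + 1`). -/
def argyleW (n : ℕ) : Finset (ℕ × ℕ) :=
  (cells n).filter (fun p =>
    Odd p.1 ∧ Odd p.2 ∧
    -((n / 3 : ℕ) : ℤ) ≤ (p.1 : ℤ) - (p.2 : ℤ) ∧
    (p.1 : ℤ) - (p.2 : ℤ) ≤ ((n / 3 : ℕ) : ℤ) - 1 ∧
    (p.1 + p.2 ≤ 2 * n / 3 ∨ (4 * n + 2) / 3 + 1 ≤ p.1 + p.2))

/-- The black squares of the `n`-argyle (for odd `n`):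
`(i,j)` with `i, j` both even, `⌈2n/3⌉ + 1 ≤ i + j ≤ ⌈4n/3⌉`, and
(`i − j ≤ −⌊n/3⌋ − 1` or `i − j ≥ ⌊n/3⌋`). -/
def argyleB (n : ℕ) : Finset (ℕ × ℕ) :=
  (cells n).filter (fun p =>
    Even p.1 ∧ Even p.2 ∧
    (2 * n + 2) / 3 + 1 ≤ p.1 + p.2 ∧ p.1 + p.2 ≤ (4 * n + 2) / 3 ∧
    ((p.1 : ℤ) - (p.2 : ℤ) ≤ -((n / 3 : ℕ) : ℤ) - 1 ∨ ((n / 3 : ℕ) : ℤ) ≤ (p.1 : ℤ) - (p.2 : ℤ)))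

lemma argyle_key (n : ℕ) (hn : Odd n) {a b : ℤ} (h : (n : ℤ) ∣ a - b)
    (he : Even (a - b)) (hb : |a - b| < 2 * n) : a = b := by
  obtain ⟨k, hk⟩ := hn
  have hcop : IsCoprime (2 : ℤ) (n : ℤ) := ⟨-k, 1, by push_cast [hk]; ring⟩
  have h2 : (2 : ℤ) ∣ a - b := he.two_dvd
  have h2n : (2 * n : ℤ) ∣ a - b := hcop.mul_dvd h2 h
  have := Int.eq_zero_of_abs_lt_dvd h2n hb
  linarith

/-- For every odd `n`, the `n`-argyle is a peaceful battle on the `n × n` torus `𝕋_n`. -/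
theorem argyle_isPeaceful (n : ℕ) (hn : Odd n) :
    IsPeacefulTorus n (argyleB n) (argyleW n) := by
  refine ⟨Finset.filter_subset _ _, Finset.filter_subset _ _, ?_, ?_⟩
  · rw [Finset.disjoint_left]
    intro p hp hq
    rw [argyleB, Finset.mem_filter] at hp
    rw [argyleW, Finset.mem_filter] at hq
    exact (Nat.not_odd_iff_even.mpr hp.2.1) hq.2.1
  intro e he
  by_contra hcon
  push_neg at hcon
  obtain ⟨p, hp⟩ := Finset.nonempty_of_ne_empty hcon.1.ne_empty
  obtain ⟨q, hq⟩ := Finset.nonempty_of_ne_empty hcon.2.ne_empty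
  rw [Finset.mem_inter] at hp hq
  obtain ⟨hpe, hpB⟩ := hp
  obtain ⟨hqe, hqW⟩ := hq
  rw [argyleB, Finset.mem_filter] at hpB
  rw [argyleW, Finset.mem_filter] at hqW
  obtain ⟨hpc, hp1, hp2, hps1, hps2, hpd⟩ := hpB
  obtain ⟨hqc, hq1, hq2, hqd1, hqd2, hqs⟩ := hqW
  rw [cells, Finset.mem_product, Finset.mem_Icc, Finset.mem_Icc] at hpc hqc
  obtain ⟨⟨hp11, hp12⟩, hp21, hp22⟩ := hpc
  obtain ⟨⟨hq11, hq12⟩, hq21, hq22⟩ := hqc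
  rcases he with ⟨i, _, rfl⟩ | ⟨j, _, rfl⟩ | ⟨k, rfl⟩ | ⟨k, rfl⟩
  · rw [Finset.mem_filter] at hpe hqe
    rw [hpe.2] at hp1
    rw [hqe.2] at hq1
    exact (Nat.not_odd_iff_even.mpr hp1) hq1
  · rw [Finset.mem_filter] at hpe hqe
    rw [hpe.2] at hp2
    rw [hqe.2] at hq2
    exact (Nat.not_odd_iff_even.mpr hp2) hq2
  · rw [Finset.mem_filter] at hpe hqe
    have hcast : (((p.1 : ℤ) - p.2 : ℤ) : ZMod n) = (((q.1 : ℤ) - q.2 : ℤ) : ZMod n) := by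
      push_cast
      rw [hpe.2, hqe.2]
    have hdvd : (n : ℤ) ∣ ((p.1 : ℤ) - p.2) - ((q.1 : ℤ) - q.2) :=
      ((ZMod.intCast_eq_intCast_iff _ _ _).mp hcast).symm.dvd
    have heven : Even (((p.1 : ℤ) - p.2) - ((q.1 : ℤ) - q.2)) := by
      obtain ⟨a, ha⟩ := hp1; obtain ⟨b, hb⟩ := hp2
      obtain ⟨c, hc⟩ := hq1; obtain ⟨d, hd⟩ := hq2
      refine ⟨(a : ℤ) - b - c + d, ?_⟩
      push_cast [ha, hb, hc, hd]; ring
    have hf : (n / 3 : ℕ) ≤ n := Nat.div_le_self n 3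
    have heq := argyle_key n hn hdvd heven (by
      rw [abs_lt]
      constructor <;> [skip; skip] <;>
        · push_cast
          omega)
    have hf3 : 3 * (n / 3 : ℕ) ≤ n := by omega
    rcases hpd with h | h <;> omega
  · rw [Finset.mem_filter] at hpe hqe
    have hcast : (((p.1 + p.2 : ℕ) : ℤ) : ZMod n) = (((q.1 + q.2 : ℕ) : ℤ) : ZMod n) := by
      push_cast
      rw [hpe.2, hqe.2]
    have hdvd : (n : ℤ) ∣ ((p.1 + p.2 : ℕ) : ℤ) - ((q.1 + q.2 : ℕ) : ℤ) :=
      ((ZMod.intCast_eq_intCast_iff _ _ _).mp hcast).symm.dvd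
    have heven : Even (((p.1 + p.2 : ℕ) : ℤ) - ((q.1 + q.2 : ℕ) : ℤ)) := by
      obtain ⟨a, ha⟩ := hp1; obtain ⟨b, hb⟩ := hp2
      obtain ⟨c, hc⟩ := hq1; obtain ⟨d, hd⟩ := hq2
      refine ⟨(a : ℤ) + b - c - d - 1, ?_⟩
      push_cast [ha, hb, hc, hd]; ring
    have heq := argyle_key n hn hdvd heven (by
      rw [abs_lt]
      constructor <;>
        · push_cast
          omega)
    have heq' : p.1 + p.2 = q.1 + q.2 := by exact_mod_cast heq
    rcases hqs with h | h <;> omega
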